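/- In the McAfee auction Case I, a winning buyer cannot lower her payment by misreporting: if buyer j ≤ k reports any bid b' instead of b_(j) while all other reports are fixed, then whenever she still wins, the price she pays is unchanged (it does not depend on her own bid). -/

import Mathlib

/-- The `k`-th highest element (0-indexed) of a multiset of reals, with
default value `0`. -/
noncomputable def nthHighest (M : Multiset ℝ) (k : ℕ) : ℝ :=
  (M.sort (· ≥ ·)).getD k 0

private lemma sort_cons_eq_orderedInsert (x : ℝ) (M : Multiset ℝ) :
    (x ::ₘ M).sort (· ≥ ·) = (M.sort (· ≥ ·)).orderedInsert (· ≥ ·) x := by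
  haveI : IsAntisymm ℝ (· ≥ ·) := ⟨fun a b h1 h2 => le_antisymm h2 h1⟩
  refine (fun hp h1 h2 => List.Perm.eq_of_pairwise' (r := (· ≥ ·)) h1 h2 hp) ?_ ?_ ?_
  · have h1 : ((x ::ₘ M).sort (· ≥ ·) : Multiset ℝ)
        = ((M.sort (· ≥ ·)).orderedInsert (· ≥ ·) x : Multiset ℝ) := by
      rw [Multiset.sort_eq]
      have := (List.perm_orderedInsert (· ≥ ·) x (M.sort (· ≥ ·)))
      rw [Multiset.coe_eq_coe.mpr this]
      rw [← Multiset.cons_coe, Multiset.sort_eq]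
    exact Multiset.coe_eq_coe.mp h1
  · exact Multiset.pairwise_sort _ _
  · exact (Multiset.pairwise_sort M (· ≥ ·)).orderedInsert x _

private lemma aux2 (t d : List ℝ) (k : ℕ) (hk : 1 ≤ k) (ht : t.length ≤ k - 1)
    (hlen : k ≤ (t ++ d).length) (x : ℝ) :
    (t ++ x :: d).getD k 0 = (t ++ d).getD (k - 1) 0 := by
  rw [List.getD_append_right _ _ _ _ (by omega), List.getD_append_right _ _ _ _ ht]
  obtain ⟨m, hm⟩ : ∃ m, k - t.length = m + 1 := ⟨k - t.length - 1, by omega⟩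
  rw [hm]
  simp only [List.getD_cons_succ]
  congr 1
  omega

private lemma aux (l : List ℝ) (k : ℕ) (hk : 1 ≤ k) (hlen : k ≤ l.length)
    (x : ℝ) (hx : l.getD (k - 1) 0 ≤ x) :
    (l.orderedInsert (· ≥ ·) x).getD k 0 = l.getD (k - 1) 0 := by
  have hk1 : k - 1 < l.length := by omega
  rw [List.orderedInsert_eq_take_drop]
  refine (aux2 _ _ k hk ?_ ?_ x).trans ?_
  · by_contra h
    have h : k - 1 < (l.takeWhile (fun b => decide (¬ x ≥ b))).length := Nat.lt_of_not_le h
    have hpre : l.takeWhile (fun b => decide (¬ x ≥ b)) <+: l := List.takeWhile_prefix _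
    have hmem : (l.takeWhile (fun b => decide (¬ x ≥ b)))[k-1]'h ∈
        l.takeWhile (fun b => decide (¬ x ≥ b)) := List.getElem_mem _
    have hPe := List.mem_takeWhile_imp hmem
    have hel : (l.takeWhile (fun b => decide (¬ x ≥ b)))[k-1]'h = l[k-1] := hpre.getElem h
    rw [List.getD_eq_getElem l 0 hk1] at hx
    rw [hel] at hPe
    simp at hPe
    exact absurd hx (not_le.mpr hPe)
  · rw [List.takeWhile_append_dropWhile]; exact hlen
  · rw [List.takeWhile_append_dropWhile]

/-- McAfee Case I price-independence: if a buyer's report stays among the top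
`k` bids (i.e. it is at least the `k`-th highest of the other bids), then the
`(k+1)`-st highest bid of the combined multiset — and hence the trade price —
does not depend on her own report. -/
theorem stmt_6 (others : Multiset ℝ) (k : ℕ) (hk : 1 ≤ k) (x y : ℝ)
    (hx : nthHighest others (k - 1) ≤ x) (hy : nthHighest others (k - 1) ≤ y) :
    nthHighest (x ::ₘ others) k = nthHighest (y ::ₘ others) k := by
  by_cases hlen : k ≤ Multiset.card others
  · have hl : k ≤ (others.sort (· ≥ ·)).length := by
      rwa [Multiset.length_sort]
    unfold nthHighest at *
    rw [sort_cons_eq_orderedInsert, sort_cons_eq_orderedInsert,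
      aux _ k hk hl x hx, aux _ k hk hl y hy]
  · push_neg at hlen
    unfold nthHighest
    rw [List.getD_eq_default, List.getD_eq_default] <;>
      simp [Multiset.length_sort] <;> omega
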